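/- Let G be a countable ICC group and let X ⊆ G be a finite symmetric subset containing the identity with |X| ≥ 2. Then there exists a finite symmetric subset Y ⊆ G with X ⊆ Y such that: (1) |Y|^200 · (1 − |X|⁻²)^(|Y|/(10|X²|+5)) < 1; and (2) for any distinct g, h ∈ G there exists a subset Y_{g,h} ⊆ Y with |Y_{g,h}| ≥ |Y|/(10|X²|+5) such that for all y₁, y₂ ∈ Y_{g,h}, the elements g·y₁ and h·y₂ are X²-apart. -/

import Mathlib

open scoped Pointwise

open Filter

/-- A group is ICC if it is nontrivial and every non-identity element has an infinite
conjugacy class. -/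
def IsICC (G : Type*) [Group G] : Prop :=
  Nontrivial G ∧ ∀ g : G, g ≠ 1 → {h : G | IsConj g h}.Infinite

/-- For a finite symmetric `X ⊆ G`, elements `a, b ∈ G` are `X`-apart if `a⁻¹ * b ∉ X`. -/
def XApart {G : Type*} [Group G] (X : Finset G) (a b : G) : Prop :=
  a⁻¹ * b ∉ X

/-- Auxiliary relation: `w` conjugates some non-identity element of `Q` into `Q`. -/
def DD {G : Type*} [Group G] (Q : Finset G) (w : G) : Prop :=
  ∃ t ∈ Q, t ≠ 1 ∧ w⁻¹ * t * w ∈ Q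

lemma DD_symm {G : Type*} [Group G] {Q : Finset G} {w : G} (h : DD Q w) : DD Q w⁻¹ := by
  obtain ⟨t, htQ, ht1, htw⟩ := h
  refine ⟨w⁻¹ * t * w, htw, ?_, ?_⟩
  · intro hh
    apply ht1
    have : w * (w⁻¹ * t * w) * w⁻¹ = w * 1 * w⁻¹ := by rw [hh]
    simpa [mul_assoc] using this
  · have : w⁻¹⁻¹ * (w⁻¹ * t * w) * w⁻¹ = t := by group
    rwa [this]

/-- Polynomial times decaying exponential is eventually less than one. -/
lemma aux_analysis {r c : ℝ} (hr0 : 0 < r) (hr1 : r < 1) (hc : 0 < c) :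
    ∃ M : ℝ, ∀ x : ℝ, M ≤ x → x ^ (200 : ℕ) * r ^ (x / c) < 1 := by
  set b : ℝ := -Real.log r / c with hbdef
  have hb : 0 < b := div_pos (neg_pos.mpr (Real.log_neg hr0 hr1)) hc
  have h2 : Tendsto (fun x : ℝ => b * x) atTop atTop :=
    Tendsto.const_mul_atTop hb tendsto_id
  have h3 : Tendsto (fun x : ℝ => (b⁻¹) ^ (200:ℕ) * ((b * x) ^ (200:ℕ) * Real.exp (-(b * x))))
      atTop (nhds ((b⁻¹) ^ (200:ℕ) * 0)) :=
    ((Real.tendsto_pow_mul_exp_neg_atTop_nhds_zero 200).comp h2).const_mul _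
  rw [mul_zero] at h3
  have h4 : Tendsto (fun x : ℝ => x ^ (200:ℕ) * Real.exp (-(b * x))) atTop (nhds 0) := by
    refine h3.congr (fun x => ?_)
    have : (b⁻¹) ^ (200:ℕ) * (b * x) ^ (200:ℕ) = x ^ (200:ℕ) := by
      rw [mul_pow, ← mul_assoc, ← mul_pow, inv_mul_cancel₀ hb.ne', one_pow, one_mul]
    rw [← mul_assoc, this]
  have h5 := h4.eventually_lt_const (by norm_num : (0:ℝ) < 1)
  obtain ⟨M, hM⟩ := eventually_atTop.mp h5
  refine ⟨M, fun x hx => ?_⟩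
  have hrw : r ^ (x / c) = Real.exp (-(b * x)) := by
    rw [Real.rpow_def_of_pos hr0]
    congr 1
    field_simp [hbdef]
    rw [hbdef]; field_simp [hc.ne']
  rw [hrw]
  exact hM x hx

/-- Greedy independent set in a graph of bounded degree. -/
lemma aux_greedy {α : Type*} [DecidableEq α] (r : α → α → Prop) [DecidableRel r]
    (hsym : ∀ a b, r a b → r b a) (d : ℕ) :
    ∀ A : Finset α, (∀ a ∈ A, ¬ r a a) → (∀ a ∈ A, (A.filter (r a)).card ≤ d) →
    ∃ W ⊆ A, A.card ≤ W.card * (d + 1) ∧ ∀ a ∈ W, ∀ b ∈ W, ¬ r a b := by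
  intro A
  induction A using Finset.strongInduction with
  | _ A ih =>
    intro hloop hdeg
    rcases A.eq_empty_or_nonempty with rfl | ⟨a, ha⟩
    · exact ⟨∅, Finset.Subset.refl _, by simp, by simp⟩
    · set N : Finset α := insert a (A.filter (r a)) with hN
      set A' : Finset α := A \ N with hA'
      have hA'ss : A' ⊂ A := by
        refine Finset.sdiff_ssubset ?_ ?_
        · exact Finset.insert_subset ha (Finset.filter_subset _ _)
        · exact ⟨a, Finset.mem_insert_self _ _⟩
      obtain ⟨W', hW'sub, hW'card, hW'ind⟩ := ih A' hA'ss
        (fun x hx => hloop x (Finset.mem_sdiff.mp hx).1)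
        (fun x hx => le_trans (Finset.card_le_card (Finset.filter_subset_filter _
          (Finset.sdiff_subset))) (hdeg x (Finset.mem_sdiff.mp hx).1))
      have haW' : a ∉ W' := fun h => (Finset.mem_sdiff.mp (hW'sub h)).2
        (Finset.mem_insert_self _ _)
      refine ⟨insert a W', ?_, ?_, ?_⟩
      · exact Finset.insert_subset ha (hW'sub.trans Finset.sdiff_subset)
      · have hNcard : N.card ≤ d + 1 := by
          calc N.card ≤ (A.filter (r a)).card + 1 := Finset.card_insert_le _ _
          _ ≤ d + 1 := Nat.add_le_add_right (hdeg a ha) 1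
        have : A.card ≤ A'.card + N.card := by
          calc A.card ≤ (A ∪ N).card := Finset.card_le_card Finset.subset_union_left
          _ = A'.card + N.card := by rw [← Finset.card_sdiff_add_card]
        rw [Finset.card_insert_of_notMem haW']
        calc A.card ≤ A'.card + N.card := this
        _ ≤ W'.card * (d+1) + (d+1) := Nat.add_le_add hW'card hNcard
        _ = (W'.card + 1) * (d+1) := by ring
      · intro x hx y hy hr
        have key : ∀ z ∈ W', ¬ r a z := fun z hz hrz =>
          (Finset.mem_sdiff.mp (hW'sub hz)).2
            (Finset.mem_insert_of_mem (Finset.mem_filter.mpr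
              ⟨(hW'sub.trans Finset.sdiff_subset) hz, hrz⟩))
        rcases Finset.mem_insert.mp hx with hx2 | hx' <;>
          rcases Finset.mem_insert.mp hy with hy2 | hy'
        · rw [hx2, hy2] at hr; exact hloop a ha hr
        · rw [hx2] at hr; exact key y hy' hr
        · rw [hy2] at hr; exact key x hx' (hsym x a hr)
        · exact hW'ind x hx' y hy' hr

/-- The centralizer of a non-identity element of an ICC group has infinite index. -/
lemma aux_cent {G : Type*} [Group G] (s : G) (hs : ({h : G | IsConj s h}).Infinite) :
    ¬ (Subgroup.centralizer {s} : Subgroup G).FiniteIndex := by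
  intro hfin
  haveI : Finite (G ⧸ Subgroup.centralizer {s}) :=
    Subgroup.finite_quotient_of_finiteIndex
  let f : G → G := fun g => g * s * g⁻¹
  have hresp : ∀ a b : G,
      (QuotientGroup.leftRel (Subgroup.centralizer {s})) a b → f a = f b := by
    intro a b hab
    rw [QuotientGroup.leftRel_apply] at hab
    have h : s * (a⁻¹ * b) = (a⁻¹ * b) * s := by
      have := Subgroup.mem_centralizer_iff.mp hab s (Set.mem_singleton s)
      exact this
    show a * s * a⁻¹ = b * s * b⁻¹
    calc a * s * a⁻¹ = a * (s * (a⁻¹ * b)) * b⁻¹ := by group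
      _ = a * ((a⁻¹ * b) * s) * b⁻¹ := by rw [h]
      _ = b * s * b⁻¹ := by group
  let F : G ⧸ Subgroup.centralizer {s} → G := Quotient.lift f hresp
  have hsub : {h : G | IsConj s h} ⊆ Set.range F := by
    intro h hh
    obtain ⟨c, hc⟩ := isConj_iff.mp hh
    exact ⟨QuotientGroup.mk c, hc⟩
  exact (hs.mono hsub) (Set.finite_range F)

/-- B. H. Neumann's lemma: a finite set together with finitely many cosets of
infinite-index subgroups cannot cover an infinite group. -/
lemma aux_avoid {G : Type*} [Group G] [Infinite G] [DecidableEq G] (F : Finset G)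
    (C : Finset (G × G))
    (hC : ∀ p ∈ C, ¬ (Subgroup.centralizer {p.2} : Subgroup G).FiniteIndex) :
    ∃ z : G, z ∉ F ∧ ∀ p ∈ C, z ∉ p.1 • (Subgroup.centralizer {p.2} : Set G) := by
  classical
  by_contra hcon
  push_neg at hcon
  set H : G ⊕ (G × G) → Subgroup G :=
    Sum.elim (fun _ => (⊥ : Subgroup G)) (fun p => Subgroup.centralizer {p.2}) with hH
  set g : G ⊕ (G × G) → G := Sum.elim id Prod.fst with hg
  set s : Finset (G ⊕ (G × G)) := F.image Sum.inl ∪ C.image Sum.inr with hs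
  have hcovers : ⋃ i ∈ s, g i • (H i : Set G) = Set.univ := by
    rw [Set.eq_univ_iff_forall]
    intro z
    rw [Set.mem_iUnion₂]
    by_cases hzF : z ∈ F
    · refine ⟨Sum.inl z, ?_, ?_⟩
      · exact Finset.mem_union_left _ (Finset.mem_image_of_mem _ hzF)
      · simp [hH, hg, mem_leftCoset_iff]
    · obtain ⟨p, hp, hzp⟩ := hcon z hzF
      exact ⟨Sum.inr p, Finset.mem_union_right _ (Finset.mem_image_of_mem _ hp), hzp⟩
  obtain ⟨k, hk, hkfin⟩ := Subgroup.exists_finiteIndex_of_leftCoset_cover hcovers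
  rcases k with x | p
  · have : (⊥ : Subgroup G).index = 0 := by
      rw [Subgroup.index_bot]
      exact Nat.card_eq_zero_of_infinite
    exact hkfin.index_ne_zero this
  · have hpC : p ∈ C := by
      rcases Finset.mem_union.mp hk with h | h
      · obtain ⟨x, _, hx⟩ := Finset.mem_image.mp h
        exact absurd hx (by simp)
      · obtain ⟨q, hq, hqe⟩ := Finset.mem_image.mp h
        rwa [← Sum.inr.inj hqe]
    exact hC p hpC hkfin

/-- One can always add a new element avoiding the conjugation relation `DD`. -/
lemma aux_step {G : Type*} [Group G] [Infinite G] [DecidableEq G] (Q : Finset G)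
    (hcent : ∀ s : G, s ≠ 1 → ¬ (Subgroup.centralizer {s} : Subgroup G).FiniteIndex)
    (Z : Finset G) :
    ∃ z : G, z ∉ Z ∧ ∀ a ∈ Z, ¬ DD Q (a⁻¹ * z) ∧ ¬ DD Q (z * a⁻¹) := by
  classical
  set w₀ : G → G → G :=
    fun t u => if h : ∃ w : G, w⁻¹ * t * w = u then h.choose else 1 with hw₀
  have hw₀spec : ∀ t u : G, (∃ w : G, w⁻¹ * t * w = u) →
      (w₀ t u)⁻¹ * t * (w₀ t u) = u := by
    intro t u h
    rw [hw₀]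
    simp only
    rw [dif_pos h]
    exact h.choose_spec
  set T : Finset (G × G × G) :=
    (Z ×ˢ Q ×ˢ Q).filter (fun x => x.2.1 ≠ 1 ∧ ∃ w : G, w⁻¹ * x.2.1 * w = x.2.2) with hT
  set C : Finset (G × G) :=
    T.image (fun x => (x.1 * w₀ x.2.1 x.2.2, x.2.2)) ∪
    T.image (fun x => (w₀ x.2.1 x.2.2 * x.1, x.1⁻¹ * x.2.2 * x.1)) with hC
  have hu_ne : ∀ x ∈ T, x.2.2 ≠ (1 : G) := by
    intro x hx
    obtain ⟨-, ht1, hex⟩ := Finset.mem_filter.mp hx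
    obtain ⟨w, hw⟩ := hex
    intro h1
    apply ht1
    rw [h1] at hw
    have : w * (w⁻¹ * x.2.1 * w) * w⁻¹ = w * 1 * w⁻¹ := by rw [hw]
    simpa [mul_assoc] using this
  have hCprop : ∀ p ∈ C, ¬ (Subgroup.centralizer {p.2} : Subgroup G).FiniteIndex := by
    intro p hp
    rcases Finset.mem_union.mp hp with h | h <;> obtain ⟨x, hxT, hxe⟩ := Finset.mem_image.mp h
    · have : p.2 = x.2.2 := by rw [← hxe]
      rw [this]
      exact hcent _ (hu_ne x hxT)
    · have : p.2 = x.1⁻¹ * x.2.2 * x.1 := by rw [← hxe]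
      rw [this]
      refine hcent _ (fun h1 => hu_ne x hxT ?_)
      have : x.1 * (x.1⁻¹ * x.2.2 * x.1) * x.1⁻¹ = x.1 * 1 * x.1⁻¹ := by rw [h1]
      simpa [mul_assoc] using this
  obtain ⟨z, hzZ, hz⟩ := aux_avoid Z C hCprop
  refine ⟨z, hzZ, fun a ha => ⟨?_, ?_⟩⟩
  · rintro ⟨t, htQ, ht1, huQ⟩
    set u : G := (a⁻¹ * z)⁻¹ * t * (a⁻¹ * z) with hu
    have hxT : (a, t, u) ∈ T := by
      rw [hT, Finset.mem_filter]
      exact ⟨by simp [Finset.mem_product, ha, htQ, huQ], ht1, ⟨a⁻¹ * z, rfl⟩⟩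
    have hpC : (a * w₀ t u, u) ∈ C := by
      rw [hC]
      exact Finset.mem_union_left _ (Finset.mem_image_of_mem _ hxT)
    apply hz _ hpC
    set c : G := w₀ t u with hcdef
    have hc : c⁻¹ * t * c = u := hw₀spec t u ⟨a⁻¹ * z, rfl⟩
    rw [mem_leftCoset_iff, SetLike.mem_coe, Subgroup.mem_centralizer_iff]
    intro v hv
    rw [Set.mem_singleton_iff] at hv
    subst hv
    show u * ((a * c)⁻¹ * z) = ((a * c)⁻¹ * z) * u
    calc u * ((a * c)⁻¹ * z) = (c⁻¹ * t * c) * (c⁻¹ * a⁻¹ * z) := by rw [hc]; group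
      _ = c⁻¹ * ((a⁻¹ * z) * ((a⁻¹ * z)⁻¹ * t * (a⁻¹ * z))) := by group
      _ = c⁻¹ * ((a⁻¹ * z) * u) := by rw [← hu]
      _ = ((a * c)⁻¹ * z) * u := by group
  · rintro ⟨t, htQ, ht1, huQ⟩
    set u : G := (z * a⁻¹)⁻¹ * t * (z * a⁻¹) with hu
    have hxT : (a, t, u) ∈ T := by
      rw [hT, Finset.mem_filter]
      exact ⟨by simp [Finset.mem_product, ha, htQ, huQ], ht1, ⟨z * a⁻¹, rfl⟩⟩
    have hpC : (w₀ t u * a, a⁻¹ * u * a) ∈ C := by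
      rw [hC]
      exact Finset.mem_union_right _ (Finset.mem_image_of_mem _ hxT)
    apply hz _ hpC
    set c : G := w₀ t u with hcdef
    have hc : c⁻¹ * t * c = u := hw₀spec t u ⟨z * a⁻¹, rfl⟩
    have key : u * (c⁻¹ * (z * a⁻¹)) = (c⁻¹ * (z * a⁻¹)) * u := by
      calc u * (c⁻¹ * (z * a⁻¹)) = (c⁻¹ * t * c) * (c⁻¹ * (z * a⁻¹)) := by rw [hc]
        _ = c⁻¹ * ((z * a⁻¹) * ((z * a⁻¹)⁻¹ * t * (z * a⁻¹))) := by group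
        _ = c⁻¹ * ((z * a⁻¹) * u) := by rw [← hu]
        _ = (c⁻¹ * (z * a⁻¹)) * u := by group
    rw [mem_leftCoset_iff, SetLike.mem_coe, Subgroup.mem_centralizer_iff]
    intro v hv
    rw [Set.mem_singleton_iff] at hv
    subst hv
    show (a⁻¹ * u * a) * ((c * a)⁻¹ * z) = ((c * a)⁻¹ * z) * (a⁻¹ * u * a)
    calc (a⁻¹ * u * a) * ((c * a)⁻¹ * z)
        = a⁻¹ * (u * (c⁻¹ * (z * a⁻¹))) * a := by group
      _ = a⁻¹ * ((c⁻¹ * (z * a⁻¹)) * u) * a := by rw [key]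
      _ = ((c * a)⁻¹ * z) * (a⁻¹ * u * a) := by group

/-- A set of `m` elements pairwise unrelated under `DD`. -/
lemma aux_Z {G : Type*} [Group G] [Infinite G] [DecidableEq G] (Q : Finset G)
    (hcent : ∀ s : G, s ≠ 1 → ¬ (Subgroup.centralizer {s} : Subgroup G).FiniteIndex)
    (m : ℕ) :
    ∃ Z : Finset G, Z.card = m ∧
      ∀ a ∈ Z, ∀ b ∈ Z, a ≠ b → ¬ DD Q (a⁻¹ * b) ∧ ¬ DD Q (a * b⁻¹) := by
  classical
  induction m with
  | zero => exact ⟨∅, by simp, by simp⟩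
  | succ n ih =>
    obtain ⟨Z, hcard, hprop⟩ := ih
    obtain ⟨z, hzZ, hz⟩ := aux_step Q hcent Z
    refine ⟨insert z Z, by rw [Finset.card_insert_of_notMem hzZ, hcard], ?_⟩
    intro a ha b hb hab
    rcases Finset.mem_insert.mp ha with ha2 | ha' <;>
      rcases Finset.mem_insert.mp hb with hb2 | hb'
    · exact absurd (ha2.trans hb2.symm) hab
    · subst ha2
      constructor
      · intro hD
        have : DD Q (b⁻¹ * a) := by simpa [mul_inv_rev] using DD_symm hD
        exact (hz b hb').1 this
      · exact (hz b hb').2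
    · subst hb2
      constructor
      · exact (hz a ha').1
      · intro hD
        have : DD Q (b * a⁻¹) := by simpa [mul_inv_rev] using DD_symm hD
        exact (hz a ha').2 this
    · exact hprop a ha' b hb' hab

set_option maxHeartbeats 1600000

/-- Let `G` be a countable ICC group and `X ⊆ G` a finite symmetric subset containing the
identity with `|X| ≥ 2`.  Then there is a finite symmetric `Y ⊇ X` with
`|Y|^200 (1 - |X|⁻²)^(|Y|/(10|X²|+5)) < 1`, such that for any distinct `g, h ∈ G` there is a
subset `Y_{g,h} ⊆ Y` of size at least `|Y|/(10|X²|+5)` with `g • y₁` and `h • y₂` being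
`X²`-apart for all `y₁, y₂ ∈ Y_{g,h}`. -/
theorem exists_good_Y (G : Type) [Group G] [Countable G] [DecidableEq G] (hICC : IsICC G)
    (X : Finset G) (hXsym : ∀ x ∈ X, x⁻¹ ∈ X) (hXone : (1 : G) ∈ X)
    (hXcard : 2 ≤ X.card) :
    ∃ Y : Finset G, X ⊆ Y ∧ (∀ y ∈ Y, y⁻¹ ∈ Y) ∧
      (Y.card : ℝ) ^ (200 : ℕ) *
        (1 - ((X.card : ℝ) ^ (2 : ℕ))⁻¹) ^
          ((Y.card : ℝ) / (10 * ((X * X).card : ℝ) + 5)) < 1 ∧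
      ∀ g h : G, g ≠ h →
        ∃ W : Finset G, W ⊆ Y ∧
          (Y.card : ℝ) / (10 * ((X * X).card : ℝ) + 5) ≤ (W.card : ℝ) ∧
          ∀ y₁ ∈ W, ∀ y₂ ∈ W, XApart (X * X) (g * y₁) (h * y₂) := by
  classical
  obtain ⟨hnt, hconj⟩ := hICC
  haveI : Infinite G := by
    obtain ⟨g₀, hg₀⟩ := exists_ne (1 : G)
    have := hconj g₀ hg₀
    rw [← Set.infinite_univ_iff]
    exact this.mono (Set.subset_univ _)
  have hcent : ∀ s : G, s ≠ 1 → ¬ (Subgroup.centralizer {s} : Subgroup G).FiniteIndex :=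
    fun s hs => aux_cent s (hconj s hs)
  set Q : Finset G := X * X with hQ
  set q : ℕ := Q.card with hq
  have hX2 : (2 : ℝ) ≤ (X.card : ℝ) := by exact_mod_cast hXcard
  have hX4 : (4 : ℝ) ≤ (X.card : ℝ) ^ (2 : ℕ) := by nlinarith
  have hrpos : 0 < 1 - ((X.card : ℝ) ^ (2 : ℕ))⁻¹ := by
    have h4 : (0:ℝ) < 4 := by norm_num
    have : ((X.card : ℝ) ^ (2 : ℕ))⁻¹ ≤ 4⁻¹ := by
      apply inv_anti₀ h4 hX4
    linarith
  have hrlt : 1 - ((X.card : ℝ) ^ (2 : ℕ))⁻¹ < 1 := by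
    have : 0 < ((X.card : ℝ) ^ (2 : ℕ))⁻¹ := by positivity
    linarith
  have hcpos : (0 : ℝ) < 10 * (q : ℝ) + 5 := by positivity
  obtain ⟨M, hM⟩ := aux_analysis hrpos hrlt hcpos
  set m : ℕ := max (5 * (X.card + 2)) ⌈M⌉₊ with hm
  obtain ⟨Z, hZcard, hZprop⟩ := aux_Z Q hcent m
  set Y : Finset G := (X ∪ Z) ∪ Z.image (·⁻¹) with hY
  have hXY : X ⊆ Y := by
    intro x hx
    exact Finset.mem_union_left _ (Finset.mem_union_left _ hx)
  have hZY : Z ⊆ Y := fun x hx => Finset.mem_union_left _ (Finset.mem_union_right _ hx)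
  have hmn : m ≤ Y.card := hZcard ▸ Finset.card_le_card hZY
  have hYsym : ∀ y ∈ Y, y⁻¹ ∈ Y := by
    intro y hy
    rcases Finset.mem_union.mp hy with hy | hy
    · rcases Finset.mem_union.mp hy with hy | hy
      · exact hXY (hXsym y hy)
      · exact Finset.mem_union_right _ (Finset.mem_image_of_mem _ hy)
    · obtain ⟨b, hb, rfl⟩ := Finset.mem_image.mp hy
      rw [inv_inv]
      exact hZY hb
  refine ⟨Y, hXY, hYsym, ?_, ?_⟩
  · -- the numerical condition
    apply hM
    calc M ≤ (⌈M⌉₊ : ℝ) := Nat.le_ceil M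
      _ ≤ (m : ℝ) := by exact_mod_cast Nat.cast_le.mpr (le_max_right _ _)
      _ ≤ (Y.card : ℝ) := by exact_mod_cast hmn
  · -- the separation condition
    intro g h hgh
    set s : G := g⁻¹ * h with hs
    have hs1 : s ≠ 1 := by
      rw [hs, Ne, inv_mul_eq_one]
      exact hgh
    set p : G → Prop := fun y => y⁻¹ * s * y ∈ Q with hp
    -- the bad set has at most |X| + 2 elements
    have hbadZ : (Z.filter p).card ≤ 1 := by
      rw [Finset.card_le_one]
      intro a ha b hb
      by_contra hab
      obtain ⟨haZ, hpa⟩ := Finset.mem_filter.mp ha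
      obtain ⟨hbZ, hpb⟩ := Finset.mem_filter.mp hb
      refine (hZprop a haZ b hbZ hab).1 ⟨a⁻¹ * s * a, hpa, ?_, ?_⟩
      · intro hcon
        apply hs1
        have : a * (a⁻¹ * s * a) * a⁻¹ = a * 1 * a⁻¹ := by rw [hcon]
        simpa [mul_assoc] using this
      · have : (a⁻¹ * b)⁻¹ * (a⁻¹ * s * a) * (a⁻¹ * b) = b⁻¹ * s * b := by group
        rw [this]
        exact hpb
    have hbadZi : ((Z.image (·⁻¹)).filter p).card ≤ 1 := by
      rw [Finset.card_le_one]
      intro a ha b hb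
      by_contra hab
      obtain ⟨haZ, hpa⟩ := Finset.mem_filter.mp ha
      obtain ⟨hbZ, hpb⟩ := Finset.mem_filter.mp hb
      obtain ⟨a', ha', rfl⟩ := Finset.mem_image.mp haZ
      obtain ⟨b', hb', rfl⟩ := Finset.mem_image.mp hbZ
      have hab' : a' ≠ b' := fun hcon => hab (by rw [hcon])
      have hpa' : a' * s * a'⁻¹ ∈ Q := by
        have heq : a' * s * a'⁻¹ = (a'⁻¹)⁻¹ * s * a'⁻¹ := by group
        rw [heq]
        exact hpa
      refine (hZprop a' ha' b' hb' hab').2 ⟨a' * s * a'⁻¹, hpa', ?_, ?_⟩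
      · intro hcon
        apply hs1
        have : a'⁻¹ * (a' * s * a'⁻¹) * a' = a'⁻¹ * 1 * a' := by rw [hcon]
        simpa [mul_assoc] using this
      · have heq : (a' * b'⁻¹)⁻¹ * (a' * s * a'⁻¹) * (a' * b'⁻¹) = (b'⁻¹)⁻¹ * s * b'⁻¹ := by
          group
        rw [heq]
        exact hpb
    have hbad : (Y.filter p).card ≤ X.card + 2 := by
      calc (Y.filter p).card
          = ((X.filter p ∪ Z.filter p) ∪ (Z.image (·⁻¹)).filter p).card := by
            rw [hY, Finset.filter_union, Finset.filter_union]
        _ ≤ (X.filter p ∪ Z.filter p).card + ((Z.image (·⁻¹)).filter p).card :=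
            Finset.card_union_le _ _
        _ ≤ (X.filter p).card + (Z.filter p).card + ((Z.image (·⁻¹)).filter p).card :=
            Nat.add_le_add_right (Finset.card_union_le _ _) _
        _ ≤ X.card + 1 + 1 :=
            Nat.add_le_add (Nat.add_le_add (Finset.card_filter_le _ _) hbadZ) hbadZi
        _ = X.card + 2 := by ring
    -- the good set
    set A : Finset G := Y.filter (fun y => ¬ p y) with hA
    have hAcard : Y.card ≤ A.card + (X.card + 2) := by
      have h1 : (Y.filter p).card + A.card = Y.card := by
        rw [hA]
        exact Finset.card_filter_add_card_filter_not (p := p)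
      omega
    have hAY : A ⊆ Y := Finset.filter_subset _ _
    -- greedy independent set
    set rel : G → G → Prop := fun y₁ y₂ => (y₁⁻¹ * s * y₂ ∈ Q) ∨ (y₂⁻¹ * s * y₁ ∈ Q)
      with hrel
    have hsym : ∀ a b, rel a b → rel b a := fun a b hab => hab.symm
    have hloop : ∀ a ∈ A, ¬ rel a a := by
      intro a ha hcon
      have := (Finset.mem_filter.mp ha).2
      rcases hcon with hc | hc <;> exact this hc
    have hdeg : ∀ a ∈ A, (A.filter (rel a)).card ≤ 2 * q := by
      intro a ha
      have hsub : A.filter (rel a) ⊆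
          A.filter (fun b => a⁻¹ * s * b ∈ Q) ∪ A.filter (fun b => b⁻¹ * s * a ∈ Q) := by
        intro b hb
        obtain ⟨hbA, hc⟩ := Finset.mem_filter.mp hb
        rcases hc with hc | hc
        · exact Finset.mem_union_left _ (Finset.mem_filter.mpr ⟨hbA, hc⟩)
        · exact Finset.mem_union_right _ (Finset.mem_filter.mpr ⟨hbA, hc⟩)
      have h1 : (A.filter (fun b => a⁻¹ * s * b ∈ Q)).card ≤ q := by
        apply Finset.card_le_card_of_injOn (fun b => a⁻¹ * s * b)
        · intro b hb
          exact (Finset.mem_filter.mp hb).2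
        · intro b₁ _ b₂ _ hb
          exact mul_left_cancel hb
      have h2 : (A.filter (fun b => b⁻¹ * s * a ∈ Q)).card ≤ q := by
        apply Finset.card_le_card_of_injOn (fun b => b⁻¹ * s * a)
        · intro b hb
          exact (Finset.mem_filter.mp hb).2
        · intro b₁ _ b₂ _ hb
          have : b₁⁻¹ = b₂⁻¹ := mul_right_cancel (mul_right_cancel hb)
          exact inv_injective this
      calc (A.filter (rel a)).card ≤ _ := Finset.card_le_card hsub
        _ ≤ _ + _ := Finset.card_union_le _ _
        _ ≤ q + q := Nat.add_le_add h1 h2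
        _ = 2 * q := by ring
    obtain ⟨W, hWA, hWcard, hWind⟩ := aux_greedy rel hsym (2 * q) A hloop hdeg
    refine ⟨W, hWA.trans hAY, ?_, ?_⟩
    · -- cardinality bound
      have hk0 : (0 : ℝ) ≤ (W.card : ℝ) := by positivity
      have hq0 : (0 : ℝ) ≤ (q : ℝ) := by positivity
      have hn0 : (0 : ℝ) ≤ (Y.card : ℝ) := by positivity
      have h5 : 5 * ((X.card : ℝ) + 2) ≤ (Y.card : ℝ) := by
        have : 5 * (X.card + 2) ≤ Y.card := le_trans (le_max_left _ _) hmn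
        exact_mod_cast this
      have hAR : (A.card : ℝ) ≤ (W.card : ℝ) * (2 * (q : ℝ) + 1) := by exact_mod_cast hWcard
      have hYR : (Y.card : ℝ) ≤ (A.card : ℝ) + ((X.card : ℝ) + 2) := by exact_mod_cast hAcard
      have key : ∀ nR aR wR xR qR : ℝ, 0 ≤ nR → 0 ≤ wR → 0 ≤ qR →
          nR ≤ aR + (xR + 2) → aR ≤ wR * (2 * qR + 1) → 5 * (xR + 2) ≤ nR →
          nR ≤ wR * (10 * qR + 5) := by
        intro nR aR wR xR qR h1 h2 h3 h4 h5' h6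
        nlinarith
      rw [div_le_iff₀ hcpos]
      exact key _ _ _ _ _ hn0 hk0 hq0 hYR hAR h5
    · -- separation
      intro y₁ hy₁ y₂ hy₂
      have hnr := hWind y₁ hy₁ y₂ hy₂
      rw [hrel] at hnr
      show (g * y₁)⁻¹ * (h * y₂) ∉ Q
      have heq : (g * y₁)⁻¹ * (h * y₂) = y₁⁻¹ * s * y₂ := by rw [hs]; group
      rw [heq]
      exact fun hc => hnr (Or.inl hc)
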